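/- Let G be a simple graph of order m·t (t a positive integer) with chromatic number χ ≤ m. If the number of edges of G is at most (m−1)·t, then G has an equitable m-coloring, i.e., a proper vertex coloring with m colors in which the sizes of any two color classes differ by at most 1. -/

import Mathlib

open Finset

/-- `G` is equitably `k`-colorable: there is a proper `k`-coloring whose color
classes pairwise differ in size by at most `1`. -/
def EquitablyColorable {V : Type*} [Fintype V] (G : SimpleGraph V) (k : ℕ) : Prop :=
  ∃ C : V → Fin k, (∀ a b, G.Adj a b → C a ≠ C b) ∧
    ∀ i j : Fin k,
      (Finset.univ.filter fun v => C v = i).card ≤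
        (Finset.univ.filter fun v => C v = j).card + 1

set_option linter.unusedSectionVars false

namespace EqColAux

variable {V : Type*} [Fintype V] {m : ℕ} {G : SimpleGraph V}

/-- Number of vertices of color `i`. -/
def sz (c : V → Fin m) (i : Fin m) : ℕ :=
  (Finset.univ.filter fun v => c v = i).card

/-- Sum of squares of color class sizes. -/
def pot (c : V → Fin m) : ℕ :=
  ∑ i, (sz c i) ^ 2

/-- `c` is a proper coloring of `G`. -/
def Proper (G : SimpleGraph V) (c : V → Fin m) : Prop :=
  ∀ a b, G.Adj a b → c a ≠ c b

/-- Some vertex of class `i` has no neighbor in class `j`. -/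
def Step (G : SimpleGraph V) (c : V → Fin m) (i j : Fin m) : Prop :=
  ∃ v, c v = i ∧ ∀ u, c u = j → ¬ G.Adj v u

lemma sum_sz (c : V → Fin m) : ∑ i, sz c i = Fintype.card V := by
  classical
  rw [← Finset.card_univ]
  rw [Finset.card_eq_sum_card_fiberwise (t := Finset.univ) (f := c) (fun x _ => Finset.mem_univ _)]
  rfl

lemma sz_update [DecidableEq V] (c : V → Fin m) (v : V) (j : Fin m) (hvj : c v ≠ j) :
    sz (Function.update c v j) j = sz c j + 1 ∧
    sz (Function.update c v j) (c v) + 1 = sz c (c v) ∧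
    ∀ k, k ≠ c v → k ≠ j → sz (Function.update c v j) k = sz c k := by
  refine ⟨?_, ?_, ?_⟩
  · have : (Finset.univ.filter fun u => Function.update c v j u = j)
        = insert v (Finset.univ.filter fun u => c u = j) := by
      ext u
      by_cases h : u = v <;> simp [Function.update_apply, h, hvj]
    rw [sz, this, Finset.card_insert_of_notMem (by simp [hvj])]
    rfl
  · have : (Finset.univ.filter fun u => Function.update c v j u = c v)
        = (Finset.univ.filter fun u => c u = c v).erase v := by
      ext u
      by_cases h : u = v <;> simp [Function.update_apply, h, Ne.symm hvj]
    rw [sz, this, Finset.card_erase_add_one (by simp)]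
    rfl
  · intro k hk1 hk2
    have : (Finset.univ.filter fun u => Function.update c v j u = k)
        = (Finset.univ.filter fun u => c u = k) := by
      ext u
      by_cases h : u = v <;> simp [Function.update_apply, h, Ne.symm hk1, Ne.symm hk2]
    rw [sz, this]; rfl

lemma proper_update [DecidableEq V] {G : SimpleGraph V} {c' : V → Fin m} (hc' : Proper G c')
    {v : V} {j : Fin m} (hv : ∀ u, c' u = j → ¬ G.Adj v u) :
    Proper G (Function.update c' v j) := by
  intro a b hab
  by_cases ha : a = v
  · have hb : b ≠ v := fun h => G.irrefl (show G.Adj v v by rw [ha, h] at hab; exact hab)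
    have hab' : G.Adj v b := by rw [← ha]; exact hab
    rw [Function.update_apply, Function.update_apply, if_pos ha, if_neg hb]
    intro h
    exact hv b h.symm hab'
  · by_cases hb : b = v
    · have hab' : G.Adj v a := by rw [← hb]; exact hab.symm
      rw [Function.update_apply, Function.update_apply, if_neg ha, if_pos hb]
      intro h
      exact hv a h hab'
    · rw [Function.update_apply, Function.update_apply, if_neg ha, if_neg hb]
      exact hc' a b hab

/-- Moving one vertex at a time along a path of `Step`s: the head class loses a
vertex, the last class gains one, and all other classes are unchanged. -/
lemma cascade [DecidableEq V] {c : V → Fin m} (hc : Proper G c) {B : Fin m} :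
    ∀ (l : List (Fin m)) (i : Fin m), List.Chain (Step G c) i l → (i :: l).Nodup →
      (i :: l).getLast (List.cons_ne_nil _ _) = B →
      ∃ c', Proper G c' ∧ (∀ u, c u ∉ (i :: l) → c' u = c u) ∧
        (∀ u, c' u ≠ c u → c' u ∈ l) ∧
        (l ≠ [] → sz c' i + 1 = sz c i ∧ sz c' B = sz c B + 1 ∧
          ∀ k, k ≠ i → k ≠ B → sz c' k = sz c k) := by
  intro l
  induction l with
  | nil =>
    intro i _ _ _
    exact ⟨c, hc, fun _ _ => rfl, fun u h => absurd rfl h, fun h => absurd rfl h⟩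
  | cons j l'' ih =>
    intro i hchain hnodup hlast
    replace hchain := List.chain_cons.mp hchain
    obtain ⟨hij, hchain'⟩ := hchain
    have hnd' : (j :: l'').Nodup := hnodup.of_cons
    have hinotin : i ∉ (j :: l'') := (List.nodup_cons.mp hnodup).1
    have hlast' : (j :: l'').getLast (List.cons_ne_nil _ _) = B := by
      rwa [List.getLast_cons_cons] at hlast
    obtain ⟨c', hc'p, hc'fix, hc'mem, hc'sz⟩ := ih j hchain' hnd' hlast'
    obtain ⟨v, hvc, hvadj⟩ := hij
    have hij' : i ≠ j := fun h => hinotin (h ▸ List.mem_cons_self)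
    have hvc' : c' v = i := by
      rw [hc'fix v (by rw [hvc]; exact hinotin), hvc]
    have hclassj : ∀ u, c' u = j → c u = j := by
      intro u hu
      by_cases h : c' u = c u
      · rw [← h, hu]
      · have h2 := hc'mem u h
        rw [hu] at h2
        exact ((List.nodup_cons.mp hnd').1 h2).elim
    have hvadj' : ∀ u, c' u = j → ¬ G.Adj v u := fun u hu => hvadj u (hclassj u hu)
    refine ⟨Function.update c' v j, proper_update hc'p hvadj', ?_, ?_, ?_⟩
    · intro u hu
      have huv : u ≠ v := fun h => hu (h ▸ hvc ▸ List.mem_cons_self)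
      rw [Function.update_apply, if_neg huv]
      exact hc'fix u (fun h => hu (List.mem_cons_of_mem _ h))
    · intro u hu
      by_cases huv : u = v
      · rw [huv, Function.update_self]; exact List.mem_cons_self
      · rw [Function.update_apply, if_neg huv] at hu ⊢
        exact List.mem_cons_of_mem _ (hc'mem u hu)
    · intro _
      have hvj' : c' v ≠ j := by rw [hvc']; exact hij'
      obtain ⟨hsz1, hsz2, hsz3⟩ := sz_update c' v j hvj'
      rw [hvc'] at hsz2 hsz3
      have hszi : sz c' i = sz c i := by
        unfold sz
        congr 1
        ext u
        simp only [mem_filter, mem_univ, true_and]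
        constructor
        · intro h
          by_cases hcu : c' u = c u
          · rw [← hcu, h]
          · have h2 := hc'mem u hcu
            rw [h] at h2
            exact (hinotin (List.mem_cons_of_mem _ h2)).elim
        · intro h
          rw [hc'fix u (by rw [h]; exact hinotin), h]
      by_cases hl : l'' = []
      · subst hl
        have hjB : j = B := by simpa using hlast'
        have hcc : c' = c := by
          funext u
          by_contra h
          simpa using hc'mem u h
        subst hjB
        refine ⟨?_, ?_, ?_⟩
        · rw [hsz2, hszi]
        · rw [hsz1, hcc]
        · intro k hki hkB
          rw [hsz3 k hki hkB, hcc]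
      · have hjB : B ∈ l'' := by
          rw [List.getLast_cons hl] at hlast'
          exact hlast' ▸ List.getLast_mem hl
        have hjneB : j ≠ B := fun h => (List.nodup_cons.mp hnd').1 (h ▸ hjB)
        have hineB : i ≠ B := fun h => hinotin (h ▸ List.mem_cons_of_mem _ hjB)
        obtain ⟨hs1, hs2, hs3⟩ := hc'sz hl
        refine ⟨?_, ?_, ?_⟩
        · rw [hsz2, hszi]
        · rw [hsz3 B hineB.symm hjneB.symm, hs2]
        · intro k hki hkB
          by_cases hkj : k = j
          · rw [hkj, hsz1, hs1]
          · rw [hsz3 k hki hkj, hs3 k hkj hkB]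

/-- Any chain can be shortened to a duplicate-free chain with the same endpoints. -/
lemma chain_dedup {α : Type*} {r : α → α → Prop} {b : α} :
    ∀ (n : ℕ) (l : List α) (a : α), l.length ≤ n → List.Chain r a l →
      (a :: l).getLast (List.cons_ne_nil _ _) = b →
      ∃ l', List.Chain r a l' ∧ ((a :: l').getLast (List.cons_ne_nil _ _) = b) ∧
        (a :: l').Nodup ∧ ∀ x ∈ l', x ∈ l := by
  intro n
  induction n with
  | zero =>
    intro l a hlen _ hlast
    have : l = [] := List.eq_nil_of_length_eq_zero (Nat.le_zero.mp hlen)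
    subst this
    exact ⟨[], List.Chain.nil, hlast, List.nodup_singleton _, by simp⟩
  | succ n ihn =>
    intro l a hlen hchain hlast
    by_cases hmem : a ∈ l
    · obtain ⟨l1, l2, rfl⟩ := List.append_of_mem hmem
      have hchain2 : List.Chain r a l2 := (List.isChain_cons_split.mp hchain).2
      have hlast2 : (a :: l2).getLast (List.cons_ne_nil _ _) = b := by
        rw [← hlast]
        exact (List.getLast_append_of_ne_nil (l := a :: l1) _ (List.cons_ne_nil a l2)).symm
      have hlen2 : l2.length ≤ n := by
        have := List.length_append (as := l1) (bs := a :: l2)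
        simp only [List.length_cons] at this hlen
        omega
      obtain ⟨l', h1, h2, h3, h4⟩ := ihn l2 a hlen2 hchain2 hlast2
      exact ⟨l', h1, h2, h3, fun x hx => by
        simp only [List.mem_append, List.mem_cons]
        exact Or.inr (Or.inr (h4 x hx))⟩
    · cases l with
      | nil => exact ⟨[], List.Chain.nil, hlast, List.nodup_singleton _, by simp⟩
      | cons j l'' =>
        replace hchain := List.chain_cons.mp hchain
        obtain ⟨haj, hchain'⟩ := hchain
        have hlast' : (j :: l'').getLast (List.cons_ne_nil _ _) = b := by
          rwa [List.getLast_cons_cons] at hlast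
        have hlen' : l''.length ≤ n := by simp at hlen; omega
        obtain ⟨l₂, h1, h2, h3, h4⟩ := ihn l'' j hlen' hchain' hlast'
        refine ⟨j :: l₂, List.chain_cons.mpr ⟨haj, h1⟩, ?_, ?_, ?_⟩
        · rwa [List.getLast_cons_cons]
        · rw [List.nodup_cons]
          refine ⟨?_, h3⟩
          intro hx
          rcases List.mem_cons.mp hx with h | h
          · exact hmem (h ▸ List.mem_cons_self)
          · exact hmem (List.mem_cons_of_mem _ (h4 a h))
        · intro x hx
          rcases List.mem_cons.mp hx with h | h
          · exact h ▸ List.mem_cons_self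
          · exact List.mem_cons_of_mem _ (h4 x h)

/-- Moving a vertex from a class of size `≥ b + 2` to a class of size `b`
strictly decreases the sum of squares of class sizes. -/
lemma pot_lt {m : ℕ} {f f' : Fin m → ℕ} {i B : Fin m} (hiB : i ≠ B)
    (h1 : f' i + 1 = f i) (h2 : f' B = f B + 1)
    (h3 : ∀ k, k ≠ i → k ≠ B → f' k = f k) (hgap : f B + 2 ≤ f i) :
    ∑ k, (f' k) ^ 2 < ∑ k, (f k) ^ 2 := by
  classical
  have hBmem : B ∈ (Finset.univ : Finset (Fin m)).erase i := by
    simp [Ne.symm hiB]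
  rw [← Finset.add_sum_erase _ _ (Finset.mem_univ i),
      ← Finset.add_sum_erase _ _ hBmem,
      ← Finset.add_sum_erase (f := fun k => (f k)^2) _ (Finset.mem_univ i),
      ← Finset.add_sum_erase (f := fun k => (f k)^2) _ hBmem]
  have htail : ∑ k ∈ ((Finset.univ.erase i).erase B), (f' k) ^ 2
      = ∑ k ∈ ((Finset.univ.erase i).erase B), (f k) ^ 2 := by
    apply Finset.sum_congr rfl
    intro k hk
    have hki : k ≠ i := Finset.ne_of_mem_erase (Finset.mem_of_mem_erase hk)
    have hkB : k ≠ B := Finset.ne_of_mem_erase hk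
    rw [h3 k hki hkB]
  rw [htail]
  have : f' i ^ 2 + f' B ^ 2 < f i ^ 2 + f B ^ 2 := by nlinarith [h1, h2, hgap]
  omega

end EqColAux

open EqColAux

theorem stmt0 {V : Type*} [Fintype V] (G : SimpleGraph V) [DecidableRel G.Adj]
    (m t : ℕ) (hm : 1 ≤ m) (ht : 1 ≤ t)
    (hcard : Fintype.card V = m * t)
    (hchrom : G.chromaticNumber ≤ m)
    (hsize : G.edgeFinset.card ≤ (m - 1) * t) :
    EquitablyColorable G m := by
  classical
  obtain ⟨C0⟩ : G.Colorable m := SimpleGraph.chromaticNumber_le_iff_colorable.mp hchrom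
  have hex : ∃ c : V → Fin m, Proper G c := ⟨C0, fun a b hab => C0.valid hab⟩
  obtain ⟨c, hcp, hcpot⟩ :
      sInf {n | ∃ c : V → Fin m, Proper G c ∧ pot c = n}
        ∈ {n | ∃ c : V → Fin m, Proper G c ∧ pot c = n} :=
    Nat.sInf_mem ⟨pot hex.choose, hex.choose, hex.choose_spec, rfl⟩
  have hmin : ∀ c' : V → Fin m, Proper G c' → pot c ≤ pot c' := fun c' h =>
    hcpot ▸ Nat.sInf_le ⟨c', h, rfl⟩
  suffices hall : ∀ i, sz c i = t by
    refine ⟨c, hcp, fun i j => ?_⟩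
    show sz c i ≤ sz c j + 1
    rw [hall i, hall j]
    omega
  by_contra hne
  push_neg at hne
  have hsum : ∑ i, sz c i = m * t := by rw [sum_sz, hcard]
  have hconst : ∑ _i : Fin m, t = m * t := by
    rw [Finset.sum_const, card_univ, Fintype.card_fin, smul_eq_mul]
  -- a deficient class B
  obtain ⟨B, hB⟩ : ∃ B, sz c B < t := by
    by_contra h
    push_neg at h
    obtain ⟨i0, hi0⟩ := hne
    have : m * t < ∑ i, sz c i := by
      rw [← hconst]
      exact Finset.sum_lt_sum (fun i _ => h i)
        ⟨i0, Finset.mem_univ _, lt_of_le_of_ne (h i0) (Ne.symm hi0)⟩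
    omega
  -- an excessive class A
  obtain ⟨A, hA⟩ : ∃ A, t < sz c A := by
    by_contra h
    push_neg at h
    have : ∑ i, sz c i < m * t := by
      rw [← hconst]
      exact Finset.sum_lt_sum (fun i _ => h i) ⟨B, Finset.mem_univ _, hB⟩
    omega
  -- the set of classes from which B is reachable by Steps
  set R : Finset (Fin m) := univ.filter fun i => Relation.ReflTransGen (Step G c) i B with hRdef
  have hBR : B ∈ R := by
    simp only [hRdef, Finset.mem_filter, Finset.mem_univ, true_and]
    exact Relation.ReflTransGen.refl
  -- classes in R are small
  have hRsz : ∀ i ∈ R, sz c i ≤ sz c B + 1 := by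
    intro i hiR
    by_contra hgap
    push_neg at hgap
    have hreach : Relation.ReflTransGen (Step G c) i B := by
      simpa only [hRdef, Finset.mem_filter, Finset.mem_univ, true_and] using hiR
    obtain ⟨l0, hl0c, hl0last⟩ := List.exists_isChain_cons_of_relationReflTransGen hreach
    obtain ⟨l, hlc, hllast, hlnd, -⟩ := chain_dedup l0.length l0 i le_rfl hl0c hl0last
    have hlne : l ≠ [] := by
      intro h
      subst h
      simp only [List.getLast_singleton] at hllast
      subst hllast
      omega
    obtain ⟨c', hc'p, -, -, hsz⟩ := cascade hcp l i hlc hlnd hllast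
    obtain ⟨h1, h2, h3⟩ := hsz hlne
    have hiB : i ≠ B := by intro h; rw [h] at hgap; omega
    have hlt : pot c' < pot c :=
      pot_lt (f := sz c) (f' := sz c') hiB h1 h2 h3 (by omega)
    exact absurd (hmin c' hc'p) (not_le.mpr hlt)
  have hAR : A ∉ R := by
    intro h
    have := hRsz A h
    omega
  have hq1 : 1 ≤ R.card := Finset.card_pos.mpr ⟨B, hBR⟩
  have hqm : R.card < m := by
    have : R ⊂ Finset.univ := ⟨Finset.subset_univ R, fun h => hAR (h (Finset.mem_univ A))⟩
    simpa using Finset.card_lt_card this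
  -- every vertex outside R-classes has a neighbor in every R-class
  have hnb : ∀ v, c v ∉ R → ∀ D ∈ R, ∃ w, c w = D ∧ G.Adj v w := by
    intro v hv D hD
    by_contra h
    push_neg at h
    apply hv
    simp only [hRdef, Finset.mem_filter, Finset.mem_univ, true_and] at hD ⊢
    exact Relation.ReflTransGen.head ⟨v, rfl, h⟩ hD
  set out : Finset V := univ.filter fun v => c v ∉ R with houtdef
  have hout_card : out.card = ∑ i ∈ Rᶜ, sz c i := by
    rw [Finset.card_eq_sum_card_fiberwise (f := c) (t := Rᶜ)
      (fun v hv => by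
        simp only [houtdef, Finset.mem_coe, Finset.mem_filter] at hv
        simpa using hv.2)]
    apply Finset.sum_congr rfl
    intro i hi
    have hiR : i ∉ R := by simpa using hi
    congr 1
    ext v
    simp only [houtdef, Finset.mem_filter, Finset.mem_univ, true_and]
    constructor
    · rintro ⟨-, h⟩; exact h
    · intro h; exact ⟨by rw [h]; exact hiR, h⟩
  -- injection from out × R into the edge set
  have hnb' : ∀ p : V × Fin m, p ∈ out ×ˢ R → ∃ w, c w = p.2 ∧ G.Adj p.1 w := by
    intro p hp
    rw [Finset.mem_product] at hp
    have h1 : c p.1 ∉ R := by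
      have := hp.1
      simp only [houtdef, Finset.mem_filter] at this
      exact this.2
    exact hnb p.1 h1 p.2 hp.2
  have hedge : out.card * R.card ≤ G.edgeFinset.card := by
    rw [← Finset.card_product]
    refine Finset.card_le_card_of_injOn
      (fun p => if h : p ∈ out ×ˢ R then s(p.1, (hnb' p h).choose) else s(p.1, p.1)) ?_ ?_
    · intro p hp
      rw [Finset.mem_coe] at hp
      simp only [dif_pos hp]
      exact SimpleGraph.mem_edgeFinset.mpr ((hnb' p hp).choose_spec.2)
    · intro p hp q hq hpq
      rw [Finset.mem_coe] at hp hq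
      simp only [dif_pos hp, dif_pos hq, Sym2.eq_iff] at hpq
      have hcp : c p.1 ∉ R := by
        have := (Finset.mem_product.mp hp).1
        simp only [houtdef, Finset.mem_filter] at this
        exact this.2
      have hcq2 : (hnb' q hq).choose ∈ {w | c w = q.2} := (hnb' q hq).choose_spec.1
      rcases hpq with ⟨h1, h2⟩ | ⟨h1, h2⟩
      · have : p.2 = q.2 := by
          rw [← (hnb' p hp).choose_spec.1, ← (hnb' q hq).choose_spec.1, h2]
        exact Prod.ext h1 this
      · exfalso
        apply hcp
        rw [h1, (hnb' q hq).choose_spec.1]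
        exact (Finset.mem_product.mp hq).2
  -- sum over R is small
  obtain ⟨q', hq'⟩ : ∃ q', R.card = q' + 1 := ⟨R.card - 1, by omega⟩
  have hRsum : ∑ i ∈ R, sz c i + 1 ≤ R.card * t := by
    have hsplit : sz c B + ∑ i ∈ R.erase B, sz c i = ∑ i ∈ R, sz c i :=
      Finset.add_sum_erase R _ hBR
    have herase : ∑ i ∈ R.erase B, sz c i ≤ (R.erase B).card * t := by
      have := Finset.sum_le_card_nsmul (R.erase B) (sz c) t
        (fun i hi => le_trans (hRsz i (Finset.mem_of_mem_erase hi)) (by omega))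
      simpa [smul_eq_mul] using this
    have hcarde : (R.erase B).card = q' := by
      rw [Finset.card_erase_of_mem hBR, hq']
      omega
    rw [hcarde] at herase
    have hmul : R.card * t = q' * t + t := by rw [hq', add_mul, one_mul]
    rw [hmul]
    omega
  have htot : ∑ i ∈ R, sz c i + out.card = m * t := by
    rw [hout_card, Finset.sum_add_sum_compl, sum_sz, hcard]
  -- final arithmetic
  obtain ⟨r, hr⟩ : ∃ r, m = R.card + r ∧ 1 ≤ r := by
    refine ⟨m - R.card, by omega, by omega⟩
  obtain ⟨hrm, hr1⟩ := hr
  have hmt : m * t = R.card * t + r * t := by rw [← add_mul, ← hrm]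
  have hout_lb : r * t + 1 ≤ out.card := by omega
  have hqr : R.card + r - 1 ≤ R.card * r := by
    obtain ⟨r', hr'⟩ : ∃ r', r = r' + 1 := ⟨r - 1, by omega⟩
    subst hr'
    rw [hq']
    have : (q' + 1) * (r' + 1) = q' * r' + q' + r' + 1 := by ring
    rw [this]
    omega
  have hfinal : (m - 1) * t + 1 ≤ G.edgeFinset.card := by
    have e1 : (r * t + 1) * R.card ≤ out.card * R.card :=
      Nat.mul_le_mul_right _ hout_lb
    have e2 : (r * t + 1) * R.card = R.card * r * t + R.card := by ring
    have e3 : (m - 1) * t ≤ R.card * r * t := by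
      refine Nat.mul_le_mul_right t ?_
      calc m - 1 = R.card + r - 1 := by omega
        _ ≤ R.card * r := hqr
    omega
  omega
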